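/- Let α ∈ [0,1) and let S(k) be the total memory weight defined by S(1) = 1/2 and S(k) = ((1-α^{k-1})/(2-α-α^k))·S(k-1) + (1-α)/(2-α-α^k). Then S(k) ≤ 1/(1+α^k) for all k ≥ 1; in particular S(k) < 1. -/

import Mathlib

/-- The total memory weight satisfies S(k) ≤ 1/(1+α^k), in particular S(k) < 1. -/
theorem sisyphus_total_weight_bound (α : ℝ) (hα : α ∈ Set.Ico (0:ℝ) 1)
    (S : ℕ → ℝ) (hS1 : S 1 = 1 / 2)
    (hrec : ∀ k, 2 ≤ k → S k = (1 - α ^ (k - 1)) / (2 - α - α ^ k) * S (k - 1)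
        + (1 - α) / (2 - α - α ^ k)) :
    ∀ k, 1 ≤ k → S k ≤ 1 / (1 + α ^ k) ∧ S k < 1 := by
  obtain ⟨hα0, hα1⟩ := hα
  intro k hk
  induction k, hk using Nat.le_induction with
  | base =>
    refine ⟨?_, by rw [hS1]; norm_num⟩
    rw [hS1, pow_one, div_le_div_iff₀ (by norm_num) (by linarith)]
    linarith
  | succ k hk ih =>
    obtain ⟨ih1, ih2⟩ := ih
    have hp : α ^ k < 1 := pow_lt_one₀ hα0 hα1 (by omega)
    have hp0 : 0 ≤ α ^ k := pow_nonneg hα0 k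
    have hq : α ^ (k + 1) = α * α ^ k := by ring
    have hq1 : α ^ (k + 1) ≤ α ^ k := by nlinarith
    have hq0 : 0 ≤ α ^ (k + 1) := pow_nonneg hα0 _
    have hd : 0 < 2 - α - α ^ (k + 1) := by nlinarith
    have hrec' := hrec (k + 1) (by omega)
    simp only [Nat.add_sub_cancel] at hrec'
    have ha0 : 0 < (1 - α ^ k) / (2 - α - α ^ (k + 1)) :=
      div_pos (by linarith) hd
    have hkey : (1 - α ^ k) / (2 - α - α ^ (k + 1)) * (1 / (1 + α ^ k))
        + (1 - α) / (2 - α - α ^ (k + 1)) = 1 / (1 + α ^ k) := by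
      have hne1 : (1 : ℝ) + α ^ k ≠ 0 := by positivity
      have hne2 : 2 - α - α * α ^ k ≠ 0 := by rw [← hq]; exact hd.ne'
      rw [hq]
      rw [div_mul_div_comm, mul_one, div_add_div _ _ (mul_ne_zero hne2 hne1) hne2,
        div_eq_div_iff (mul_ne_zero (mul_ne_zero hne2 hne1) hne2) hne1]
      ring
    constructor
    · rw [hrec']
      have h1 : (1 - α ^ k) / (2 - α - α ^ (k + 1)) * S k
          ≤ (1 - α ^ k) / (2 - α - α ^ (k + 1)) * (1 / (1 + α ^ k)) :=
        mul_le_mul_of_nonneg_left ih1 ha0.le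
      have h2 : (1 : ℝ) / (1 + α ^ k) ≤ 1 / (1 + α ^ (k + 1)) :=
        one_div_le_one_div_of_le (by linarith) (by linarith)
      linarith
    · rw [hrec']
      have h1 : (1 - α ^ k) / (2 - α - α ^ (k + 1)) * S k
          < (1 - α ^ k) / (2 - α - α ^ (k + 1)) * 1 :=
        mul_lt_mul_of_pos_left ih2 ha0
      have h2 : (1 - α ^ k) / (2 - α - α ^ (k + 1))
          + (1 - α) / (2 - α - α ^ (k + 1)) ≤ 1 := by
        rw [← add_div, div_le_one hd]; linarith
      linarith
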